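/- If Φ = {φ_i}_{i=1}^M is an equiangular Parseval frame for F^N and Ψ = {ψ_i}_{i=1}^M is any Parseval frame for F^N, then ∑_{i≠j} |⟨ψ_i,ψ_j⟩| ≤ ∑_{i≠j} |⟨φ_i,φ_j⟩|; that is, equiangular Parseval frames maximize total coherence. -/

import Mathlib

open Matrix Finset

noncomputable def totalCoherence {N M : ℕ} (Φ : Matrix (Fin N) (Fin M) ℂ) : ℝ :=
  ∑ i, ∑ j ∈ Finset.univ.erase i, ‖(Φᴴ * Φ) i j‖

section Aux

variable {N M : ℕ}

private lemma gram_diag (X : Matrix (Fin N) (Fin M) ℂ) (i : Fin M) :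
    (Xᴴ * X) i i = ((∑ k, Complex.normSq (X k i) : ℝ) : ℂ) := by
  simp [Matrix.mul_apply, Matrix.conjTranspose_apply, Complex.normSq_eq_conj_mul_self]

private lemma gram_trace (X : Matrix (Fin N) (Fin M) ℂ) (hX : X * Xᴴ = 1) :
    ∑ i, (Xᴴ * X) i i = (N : ℂ) := by
  have : (Xᴴ * X).trace = (N : ℂ) := by
    rw [Matrix.trace_mul_comm, hX, Matrix.trace_one]; simp
  simpa [Matrix.trace, Matrix.diag] using this

private lemma gram_sq_sum (X : Matrix (Fin N) (Fin M) ℂ) (hX : X * Xᴴ = 1) :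
    ∑ i, ∑ j, ‖(Xᴴ * X) i j‖ ^ 2 = (N : ℝ) := by
  set G := Xᴴ * X with hG
  have hherm : Gᴴ = G := by
    rw [hG, Matrix.conjTranspose_mul, Matrix.conjTranspose_conjTranspose]
  have hproj : G * G = G := by
    rw [hG, Matrix.mul_assoc, ← Matrix.mul_assoc X, hX, Matrix.one_mul]
  have htr : (G * G).trace = (N : ℂ) := by
    rw [hproj]; simpa [Matrix.trace, Matrix.diag] using gram_trace X hX
  have hexp : (G * G).trace = ((∑ i, ∑ j, ‖G i j‖ ^ 2 : ℝ) : ℂ) := by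
    rw [Matrix.trace]
    push_cast
    simp only [Matrix.diag_apply, Matrix.mul_apply]
    refine Finset.sum_congr rfl fun i _ => Finset.sum_congr rfl fun j _ => ?_
    have hji : G j i = star (G i j) := by
      conv_lhs => rw [← hherm]
      rfl
    have h2 : G i j * star (G i j) = ((Complex.normSq (G i j)) : ℂ) := Complex.mul_conj _
    rw [hji, h2]
    norm_cast
    exact (Complex.sq_norm _).symm
  rw [hexp] at htr
  exact_mod_cast htr

end Aux

/-- Equiangular Parseval frames maximize total coherence among all Parseval frames. -/
theorem equiangular_maximizes_totalCoherence {N M : ℕ}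
    (Φ Ψ : Matrix (Fin N) (Fin M) ℂ)
    (hΦ : Φ * Φᴴ = 1)
    (hEqualNorm : ∀ i j, (Φᴴ * Φ) i i = (Φᴴ * Φ) j j)
    (hEquiangular : ∃ c : ℝ, ∀ i j, i ≠ j → ‖(Φᴴ * Φ) i j‖ = c)
    (hΨ : Ψ * Ψᴴ = 1) :
    totalCoherence Ψ ≤ totalCoherence Φ := by
  obtain ⟨c, hc⟩ := hEquiangular
  set K : ℝ := ((M * (M - 1) : ℕ) : ℝ) with hK
  set dΦ : Fin M → ℝ := fun i => ∑ k, Complex.normSq (Φ k i) with hdΦ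
  set dΨ : Fin M → ℝ := fun i => ∑ k, Complex.normSq (Ψ k i) with hdΨ
  set S2Φ : ℝ := ∑ i, ∑ j ∈ Finset.univ.erase i, ‖(Φᴴ * Φ) i j‖ ^ 2 with hS2Φ
  set S2Ψ : ℝ := ∑ i, ∑ j ∈ Finset.univ.erase i, ‖(Ψᴴ * Ψ) i j‖ ^ 2 with hS2Ψ
  have split : ∀ (X : Matrix (Fin N) (Fin M) ℂ),
      ∑ i, ∑ j, ‖(Xᴴ * X) i j‖ ^ 2
        = (∑ i, (∑ k, Complex.normSq (X k i)) ^ 2)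
          + ∑ i, ∑ j ∈ Finset.univ.erase i, ‖(Xᴴ * X) i j‖ ^ 2 := by
    intro X
    rw [← Finset.sum_add_distrib]
    refine Finset.sum_congr rfl fun i _ => ?_
    rw [← Finset.sum_erase_add _ _ (Finset.mem_univ i), add_comm]
    congr 1
    rw [gram_diag X i, Complex.norm_real, Real.norm_eq_abs,
      abs_of_nonneg (Finset.sum_nonneg fun k _ => Complex.normSq_nonneg _)]
  have trΦ : ∑ i, dΦ i = (N : ℝ) := by
    have := gram_trace Φ hΦ
    simp only [gram_diag Φ] at this
    exact_mod_cast this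
  have trΨ : ∑ i, dΨ i = (N : ℝ) := by
    have := gram_trace Ψ hΨ
    simp only [gram_diag Ψ] at this
    exact_mod_cast this
  have sqΦ : (∑ i, dΦ i ^ 2) + S2Φ = (N : ℝ) := by
    rw [hS2Φ, ← split Φ, gram_sq_sum Φ hΦ]
  have sqΨ : (∑ i, dΨ i ^ 2) + S2Ψ = (N : ℝ) := by
    rw [hS2Ψ, ← split Ψ, gram_sq_sum Ψ hΨ]
  have hdeq : ∀ i j, dΦ i = dΦ j := by
    intro i j
    have := hEqualNorm i j
    rw [gram_diag Φ i, gram_diag Φ j] at this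
    exact_mod_cast this
  have hMdΦ : (M : ℝ) * ∑ i, dΦ i ^ 2 = (N : ℝ) ^ 2 := by
    have h : (∑ i, dΦ i) ^ 2 = (M : ℝ) * ∑ i, dΦ i ^ 2 := by
      calc (∑ i, dΦ i) ^ 2 = ∑ i, ∑ j, dΦ i * dΦ j := by
            rw [sq, Finset.sum_mul_sum]
        _ = ∑ i : Fin M, ∑ _j : Fin M, dΦ i ^ 2 := by
            refine Finset.sum_congr rfl fun i _ => Finset.sum_congr rfl fun j _ => ?_
            rw [hdeq j i]; ring
        _ = (M : ℝ) * ∑ i, dΦ i ^ 2 := by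
            simp [Finset.sum_const, Finset.card_univ, Finset.mul_sum, mul_comm]
    rw [← h, trΦ]
  have hMdΨ : (N : ℝ) ^ 2 ≤ (M : ℝ) * ∑ i, dΨ i ^ 2 := by
    have := sq_sum_le_card_mul_sum_sq (s := (Finset.univ : Finset (Fin M))) (f := dΨ)
    rw [trΨ] at this
    simpa using this
  have hS2 : (M : ℝ) * S2Ψ ≤ (M : ℝ) * S2Φ := by
    have e1 : (M : ℝ) * (∑ i, dΨ i ^ 2) + (M : ℝ) * S2Ψ = (M : ℝ) * N := by
      rw [← mul_add, sqΨ]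
    have e2 : (M : ℝ) * (∑ i, dΦ i ^ 2) + (M : ℝ) * S2Φ = (M : ℝ) * N := by
      rw [← mul_add, sqΦ]
    linarith
  have hTCΨ : totalCoherence Ψ ^ 2 ≤ K * S2Ψ := by
    have h := sq_sum_le_card_mul_sum_sq
      (s := (Finset.univ : Finset (Fin M)).sigma fun i => Finset.univ.erase i)
      (f := fun p => ‖(Ψᴴ * Ψ) p.1 p.2‖)
    rw [Finset.sum_sigma, Finset.sum_sigma, Finset.card_sigma] at h
    simpa [totalCoherence, hS2Ψ, hK, Finset.card_erase_of_mem, Finset.sum_const,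
      mul_comm] using h
  have hTCΦ : totalCoherence Φ = K * c := by
    rw [totalCoherence]
    have h : ∀ i : Fin M, ∑ j ∈ Finset.univ.erase i, ‖(Φᴴ * Φ) i j‖
        = ((M - 1 : ℕ) : ℝ) * c := by
      intro i
      rw [Finset.sum_congr rfl fun j hj => hc i j (Ne.symm (Finset.ne_of_mem_erase hj))]
      simp [Finset.card_erase_of_mem, mul_comm]
    rw [Finset.sum_congr rfl fun i _ => h i]
    rw [Finset.sum_const, Finset.card_univ, Fintype.card_fin, hK]
    push_cast
    ring
  have hS2Φval : S2Φ = K * c ^ 2 := by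
    rw [hS2Φ]
    have h : ∀ i : Fin M, ∑ j ∈ Finset.univ.erase i, ‖(Φᴴ * Φ) i j‖ ^ 2
        = ((M - 1 : ℕ) : ℝ) * c ^ 2 := by
      intro i
      rw [Finset.sum_congr rfl fun j hj => by
        rw [hc i j (Ne.symm (Finset.ne_of_mem_erase hj))]]
      simp [Finset.card_erase_of_mem, mul_comm]
    rw [Finset.sum_congr rfl fun i _ => h i]
    rw [Finset.sum_const, Finset.card_univ, Fintype.card_fin, hK]
    push_cast
    ring
  have hKval : K = (M : ℝ) * ((M - 1 : ℕ) : ℝ) := by rw [hK]; push_cast; ring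
  have hMsub : (0 : ℝ) ≤ ((M - 1 : ℕ) : ℝ) := Nat.cast_nonneg _
  have h1 : K * S2Ψ ≤ K * S2Φ := by
    calc K * S2Ψ = ((M - 1 : ℕ) : ℝ) * ((M : ℝ) * S2Ψ) := by rw [hKval]; ring
      _ ≤ ((M - 1 : ℕ) : ℝ) * ((M : ℝ) * S2Φ) := mul_le_mul_of_nonneg_left hS2 hMsub
      _ = K * S2Φ := by rw [hKval]; ring
  have hfin : totalCoherence Ψ ^ 2 ≤ totalCoherence Φ ^ 2 := by
    calc totalCoherence Ψ ^ 2 ≤ K * S2Ψ := hTCΨ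
      _ ≤ K * S2Φ := h1
      _ = (K * c) ^ 2 := by rw [hS2Φval]; ring
      _ = totalCoherence Φ ^ 2 := by rw [hTCΦ]
  have h0Φ : 0 ≤ totalCoherence Φ :=
    Finset.sum_nonneg fun i _ => Finset.sum_nonneg fun j _ => norm_nonneg _
  have h0Ψ : 0 ≤ totalCoherence Ψ :=
    Finset.sum_nonneg fun i _ => Finset.sum_nonneg fun j _ => norm_nonneg _
  calc totalCoherence Ψ = Real.sqrt (totalCoherence Ψ ^ 2) := (Real.sqrt_sq h0Ψ).symm
    _ ≤ Real.sqrt (totalCoherence Φ ^ 2) := Real.sqrt_le_sqrt hfin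
    _ = totalCoherence Φ := Real.sqrt_sq h0Φ
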